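/- Let (M,d) be a compact metric space, f : M → M a continuous map, μ a Borel probability measure on M, and p ∈ M a point whose empirical measures converge to μ, i.e., (1/j) Σ_{i=0}^{j−1} δ_{f^i(p)} → μ in the weak* topology as j → ∞. Suppose (f_n)_{n≥1} is a sequence of continuous maps f_n : M → M and (p_n)_{n≥1} a sequence of points such that each p_n is a periodic point of f_n with period π_n ≥ 1 (i.e., f_n^{π_n}(p_n) = p_n), π_n → ∞ as n → ∞, and d(f^j(p), f_n^j(p_n)) ≤ 1/n for all 0 ≤ j ≤ π_n. Then the measures μ_n = (1/π_n) Σ_{i=0}^{π_n−1} δ_{f_n^i(p_n)} converge to μ in the weak* topology as n → ∞. -/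

import Mathlib

open MeasureTheory Filter Topology

/-- The empirical (Birkhoff average) measure `(1/k) ∑_{i<k} δ_{T^i x}`. -/
noncomputable def empiricalMeasure {M : Type*} [MeasurableSpace M]
    (T : M → M) (x : M) (k : ℕ) : Measure M :=
  (k : ENNReal)⁻¹ • ∑ i ∈ Finset.range k, Measure.dirac (T^[i] x)

lemma integral_empiricalMeasure {M : Type*} [MetricSpace M] [CompactSpace M]
    [MeasurableSpace M] [BorelSpace M] (g : C(M, ℝ)) (T : M → M) (x : M) (k : ℕ) :
    ∫ y, g y ∂(empiricalMeasure T x k)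
      = (k : ℝ)⁻¹ * ∑ i ∈ Finset.range k, g (T^[i] x) := by
  have hint : ∀ a : M, Integrable (fun y => g y) (Measure.dirac a) := fun a =>
    g.continuous.integrable_of_hasCompactSupport (HasCompactSupport.of_compactSpace _)
  rw [empiricalMeasure, integral_smul_measure, integral_finset_sum_measure
    (fun i _ => hint _)]
  simp [integral_dirac, ENNReal.toReal_inv, smul_eq_mul]

/-- If the empirical measures of `p` under `f` converge weakly* to `μ`, and `p n` is a
periodic point of `f n` of period `π n → ∞` whose orbit `1/n`-shadows the orbit of `p`,
then the periodic orbit measures `(1/π n) ∑_{i<π n} δ_{(f n)^i (p n)}` also converge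
weakly* to `μ`. -/
theorem periodic_orbit_measures_tendsto
    {M : Type*} [MetricSpace M] [CompactSpace M] [MeasurableSpace M] [BorelSpace M]
    (f : M → M) (hf : Continuous f)
    (μ : Measure M) [IsProbabilityMeasure μ] (p : M)
    (hemp : ∀ g : C(M, ℝ),
      Tendsto (fun j => ∫ x, g x ∂(empiricalMeasure f p j)) atTop (𝓝 (∫ x, g x ∂μ)))
    (fs : ℕ → M → M) (hfs : ∀ n, Continuous (fs n))
    (ps : ℕ → M) (π : ℕ → ℕ)
    (hπ1 : ∀ n, 1 ≤ π n)
    (hper : ∀ n, (fs n)^[π n] (ps n) = ps n)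
    (hπ : Tendsto π atTop atTop)
    (hshadow : ∀ n, 1 ≤ n → ∀ j ≤ π n, dist (f^[j] p) ((fs n)^[j] (ps n)) ≤ 1 / n) :
    ∀ g : C(M, ℝ),
      Tendsto (fun n => ∫ x, g x ∂(empiricalMeasure (fs n) (ps n) (π n))) atTop
        (𝓝 (∫ x, g x ∂μ)) := by
  intro g
  set A : ℕ → ℝ := fun k => (k : ℝ)⁻¹ * ∑ i ∈ Finset.range k, g (f^[i] p) with hA
  set B : ℕ → ℝ := fun n => (π n : ℝ)⁻¹ * ∑ i ∈ Finset.range (π n), g ((fs n)^[i] (ps n))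
    with hB
  have hAtend : Tendsto (fun n => A (π n)) atTop (𝓝 (∫ x, g x ∂μ)) := by
    have := (hemp g).comp hπ
    simpa [Function.comp_def, integral_empiricalMeasure, hA] using this
  have hDtend : Tendsto (fun n => B n - A (π n)) atTop (𝓝 0) := by
    rw [Metric.tendsto_atTop]
    intro ε hε
    obtain ⟨δ, hδpos, hδ⟩ := Metric.uniformContinuous_iff.1
      (CompactSpace.uniformContinuous_of_continuous g.continuous) (ε / 2) (half_pos hε)
    obtain ⟨N, hN⟩ := exists_nat_gt (1 / δ)
    refine ⟨max N 1, fun n hn => ?_⟩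
    have hn1 : 1 ≤ n := le_trans (le_max_right _ _) hn
    have hnN : (N : ℝ) ≤ n := Nat.cast_le.2 (le_trans (le_max_left _ _) hn)
    have hnpos : (0 : ℝ) < n := by positivity
    have h1n : 1 / (n : ℝ) < δ := by
      rw [div_lt_iff₀ hnpos]
      calc (1 : ℝ) = δ * (1 / δ) := by field_simp
        _ < δ * n := by
          apply mul_lt_mul_of_pos_left _ hδpos
          exact lt_of_lt_of_le hN hnN
    have hπpos : (0 : ℝ) < (π n : ℝ) := by exact_mod_cast hπ1 n
    have hterm : ∀ i ∈ Finset.range (π n),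
        |g ((fs n)^[i] (ps n)) - g (f^[i] p)| ≤ ε / 2 := by
      intro i hi
      have hi' : i ≤ π n := le_of_lt (Finset.mem_range.1 hi)
      have hd : dist (f^[i] p) ((fs n)^[i] (ps n)) < δ :=
        lt_of_le_of_lt (hshadow n hn1 i hi') h1n
      have := hδ hd
      rw [Real.dist_eq, abs_sub_comm] at this
      exact le_of_lt this
    have hbound : |B n - A (π n)| ≤ ε / 2 := by
      have : B n - A (π n)
          = (π n : ℝ)⁻¹ * ∑ i ∈ Finset.range (π n),
              (g ((fs n)^[i] (ps n)) - g (f^[i] p)) := by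
        rw [hA, hB, Finset.sum_sub_distrib]; ring
      rw [this, abs_mul, abs_inv, abs_of_pos hπpos]
      calc (π n : ℝ)⁻¹ * |∑ i ∈ Finset.range (π n),
              (g ((fs n)^[i] (ps n)) - g (f^[i] p))|
          ≤ (π n : ℝ)⁻¹ * ∑ i ∈ Finset.range (π n),
              |g ((fs n)^[i] (ps n)) - g (f^[i] p)| := by
            apply mul_le_mul_of_nonneg_left (Finset.abs_sum_le_sum_abs _ _)
            positivity
        _ ≤ (π n : ℝ)⁻¹ * ((π n : ℝ) * (ε / 2)) := by
            apply mul_le_mul_of_nonneg_left _ (by positivity)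
            calc ∑ i ∈ Finset.range (π n), |g ((fs n)^[i] (ps n)) - g (f^[i] p)|
                ≤ ∑ _i ∈ Finset.range (π n), (ε / 2) := Finset.sum_le_sum hterm
              _ = (π n : ℝ) * (ε / 2) := by simp [mul_comm]
        _ = ε / 2 := by field_simp
    rw [Real.dist_eq, sub_zero]
    exact lt_of_le_of_lt hbound (half_lt_self hε)
  have : Tendsto B atTop (𝓝 (∫ x, g x ∂μ)) := by
    have := hDtend.add hAtend
    simpa using this
  simpa [integral_empiricalMeasure, hB] using this
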